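/- Let n be an even positive integer, p > n/2, and γ>1, ν>0, μ>0 real constants. Let X = [X₁ | X₂] ∈ ℝ^{n×p}, where X₁ consists of the first p−n/2 columns and X₂ of the last n/2 columns. Let Σ ∈ ℝ^{p×p} be diagonal with nonnegative entries whose first p−n/2 diagonal entries are all at least ν. Assume that min_{‖v‖=1} (1/n)‖X₂v‖² ≥ 1/25 and max_{‖v‖=1} (1/n)‖X₁v‖² ≤ 9γ². Then the minimum eigenvalue of the symmetric matrix (1/n)XᵀX + μΣ is at least min( μν/(400γ²), (√399/100 − 3/20)² ). -/

import Mathlib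

open Matrix

private lemma aux_scale_le {m k : ℕ} (Y : Matrix (Fin m) (Fin k) ℝ) (t : ℝ)
    (h : ∀ w : Fin k → ℝ, ∑ i, w i ^ 2 = 1 → t ≤ ∑ i, (Y.mulVec w i) ^ 2)
    (w : Fin k → ℝ) : t * ∑ i, w i ^ 2 ≤ ∑ i, (Y.mulVec w i) ^ 2 := by
  set s : ℝ := ∑ i, w i ^ 2 with hs
  have hs0 : 0 ≤ s := Finset.sum_nonneg fun i _ => sq_nonneg _
  rcases eq_or_lt_of_le hs0 with h0 | hpos
  · have hw0 : w = 0 := by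
      funext i
      exact pow_eq_zero_iff two_ne_zero |>.1 ((Finset.sum_eq_zero_iff_of_nonneg
        (fun i _ => sq_nonneg (w i))).1 h0.symm i (Finset.mem_univ i))
    rw [hw0, ← h0]
    simp
  · have hsq : 0 < Real.sqrt s := Real.sqrt_pos.2 hpos
    set c : ℝ := (Real.sqrt s)⁻¹ with hc
    have hc2 : c ^ 2 = s⁻¹ := by
      rw [hc, ← Real.sqrt_inv, Real.sq_sqrt (by positivity)]
    have hunit : ∑ i, (c • w) i ^ 2 = 1 := by
      simp only [Pi.smul_apply, smul_eq_mul, mul_pow, ← Finset.mul_sum, ← hs, hc2]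
      exact inv_mul_cancel₀ hpos.ne'
    have hkey := h (c • w) hunit
    have hmv : ∑ i, (Y.mulVec (c • w) i) ^ 2 = c ^ 2 * ∑ i, (Y.mulVec w i) ^ 2 := by
      rw [Matrix.mulVec_smul]
      simp only [Pi.smul_apply, smul_eq_mul, mul_pow, ← Finset.mul_sum]
    rw [hmv, hc2] at hkey
    have := mul_le_mul_of_nonneg_left hkey hpos.le
    rwa [mul_inv_cancel_left₀ hpos.ne', mul_comm s t] at this

private lemma aux_scale_ge {m k : ℕ} (Y : Matrix (Fin m) (Fin k) ℝ) (t : ℝ)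
    (h : ∀ w : Fin k → ℝ, ∑ i, w i ^ 2 = 1 → ∑ i, (Y.mulVec w i) ^ 2 ≤ t)
    (w : Fin k → ℝ) : ∑ i, (Y.mulVec w i) ^ 2 ≤ t * ∑ i, w i ^ 2 := by
  set s : ℝ := ∑ i, w i ^ 2 with hs
  have hs0 : 0 ≤ s := Finset.sum_nonneg fun i _ => sq_nonneg _
  rcases eq_or_lt_of_le hs0 with h0 | hpos
  · have hw0 : w = 0 := by
      funext i
      exact pow_eq_zero_iff two_ne_zero |>.1 ((Finset.sum_eq_zero_iff_of_nonneg
        (fun i _ => sq_nonneg (w i))).1 h0.symm i (Finset.mem_univ i))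
    rw [hw0, ← h0]
    simp
  · have hsq : 0 < Real.sqrt s := Real.sqrt_pos.2 hpos
    set c : ℝ := (Real.sqrt s)⁻¹ with hc
    have hc2 : c ^ 2 = s⁻¹ := by
      rw [hc, ← Real.sqrt_inv, Real.sq_sqrt (by positivity)]
    have hunit : ∑ i, (c • w) i ^ 2 = 1 := by
      simp only [Pi.smul_apply, smul_eq_mul, mul_pow, ← Finset.mul_sum, ← hs, hc2]
      exact inv_mul_cancel₀ hpos.ne'
    have hkey := h (c • w) hunit
    have hmv : ∑ i, (Y.mulVec (c • w) i) ^ 2 = c ^ 2 * ∑ i, (Y.mulVec w i) ^ 2 := by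
      rw [Matrix.mulVec_smul]
      simp only [Pi.smul_apply, smul_eq_mul, mul_pow, ← Finset.mul_sum]
    rw [hmv, hc2] at hkey
    have := mul_le_mul_of_nonneg_left hkey hpos.le
    rwa [mul_inv_cancel_left₀ hpos.ne', mul_comm s t] at this


set_option maxHeartbeats 400000 in
/-- Let `n` be an even positive integer, `p > n/2`, and
`γ > 1`, `ν > 0`, `μ > 0`. Let `X = [X₁ | X₂] ∈ ℝ^{n×p}` where `X₁` has the
first `p − n/2` columns and `X₂` the last `n/2` columns. Let `Σ = diagonal d`
with nonnegative entries whose first `p − n/2` diagonal entries are `≥ ν`.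
If `min_{‖v‖=1} (1/n)‖X₂v‖² ≥ 1/25` and `max_{‖v‖=1} (1/n)‖X₁v‖² ≤ 9γ²`, then
the minimum eigenvalue of `(1/n)XᵀX + μΣ` (i.e. `min_{‖v‖=1} vᵀMv`) is at
least `min (μν/(400γ²)) ((√399/100 − 3/20)²)`. -/
theorem stmt11 (n p : ℕ) (hn : 0 < n) (hneven : Even n) (hp : n / 2 < p)
    (γ ν μ : ℝ) (hγ : 1 < γ) (hν : 0 < ν) (hμ : 0 < μ)
    (X₁ : Matrix (Fin n) (Fin (p - n / 2)) ℝ) (X₂ : Matrix (Fin n) (Fin (n / 2)) ℝ)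
    (d : Fin (p - n / 2) ⊕ Fin (n / 2) → ℝ) (hd : ∀ i, 0 ≤ d i)
    (hdν : ∀ i : Fin (p - n / 2), ν ≤ d (Sum.inl i))
    (hX2 : ∀ v : Fin (n / 2) → ℝ, ∑ i, v i ^ 2 = 1 →
      1 / 25 ≤ (1 / (n:ℝ)) * ∑ i, (X₂.mulVec v i) ^ 2)
    (hX1 : ∀ v : Fin (p - n / 2) → ℝ, ∑ i, v i ^ 2 = 1 →
      (1 / (n:ℝ)) * ∑ i, (X₁.mulVec v i) ^ 2 ≤ 9 * γ ^ 2) :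
    ∀ v : Fin (p - n / 2) ⊕ Fin (n / 2) → ℝ, ∑ i, v i ^ 2 = 1 →
      min (μ * ν / (400 * γ ^ 2)) ((Real.sqrt 399 / 100 - 3 / 20) ^ 2) ≤
        v ⬝ᵥ ((((1:ℝ) / n) • ((Matrix.fromCols X₁ X₂)ᵀ * Matrix.fromCols X₁ X₂)
          + μ • Matrix.diagonal d).mulVec v) := by
  intro v hv
  have hn' : (0:ℝ) < n := by exact_mod_cast hn
  have hγ0 : (0:ℝ) < γ := lt_trans one_pos hγ
  set a : Fin (p - n / 2) → ℝ := fun i => v (Sum.inl i) with ha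
  set b : Fin (n / 2) → ℝ := fun i => v (Sum.inr i) with hb
  have hvab : v = Sum.elim a b := by funext x; cases x <;> rfl
  set A := Matrix.fromCols X₁ X₂ with hA
  set sa : ℝ := ∑ i, a i ^ 2 with hsa
  set sb : ℝ := ∑ i, b i ^ 2 with hsb
  set S1 : ℝ := ∑ i, (X₁.mulVec a i) ^ 2 with hS1d
  set S2 : ℝ := ∑ i, (X₂.mulVec b i) ^ 2 with hS2d
  set T : ℝ := ∑ i, ((X₁.mulVec a + X₂.mulVec b) i) ^ 2 with hTd
  set C : ℝ := ∑ i, X₁.mulVec a i * X₂.mulVec b i with hCd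
  set D : ℝ := ∑ j, d j * v j ^ 2 with hDd
  -- decompose the quadratic form
  have key : v ⬝ᵥ ((((1:ℝ)/n) • (Aᵀ * A) + μ • Matrix.diagonal d).mulVec v)
      = (1/(n:ℝ)) * T + μ * D := by
    rw [Matrix.add_mulVec, Matrix.smul_mulVec, Matrix.smul_mulVec,
      dotProduct_add, dotProduct_smul, dotProduct_smul, smul_eq_mul, smul_eq_mul]
    congr 1
    · congr 1
      rw [← Matrix.mulVec_mulVec, Matrix.dotProduct_mulVec, Matrix.vecMul_transpose]
      have hAv : A.mulVec v = X₁.mulVec a + X₂.mulVec b := by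
        rw [hvab, hA, Matrix.fromCols_mulVec_sumElim]
      rw [hAv, hTd]
      simp [dotProduct, sq]
    · congr 1
      rw [hDd]
      simp only [dotProduct, Matrix.mulVec_diagonal]
      exact Finset.sum_congr rfl fun j _ => by ring
  rw [key]
  have hsa0 : 0 ≤ sa := Finset.sum_nonneg fun i _ => sq_nonneg _
  have hsb0 : 0 ≤ sb := Finset.sum_nonneg fun i _ => sq_nonneg _
  have hsum : sa + sb = 1 := by
    rw [hsa, hsb, ha, hb, ← hv, Fintype.sum_sum_type]
  have hS10 : 0 ≤ S1 := Finset.sum_nonneg fun i _ => sq_nonneg _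
  have hS20 : 0 ≤ S2 := Finset.sum_nonneg fun i _ => sq_nonneg _
  have hT0 : 0 ≤ T := Finset.sum_nonneg fun i _ => sq_nonneg _
  -- bound on the diagonal term
  have hdiag : ν * sa ≤ D := by
    rw [hDd, Fintype.sum_sum_type]
    have h1 : ν * sa ≤ ∑ i : Fin (p - n/2), d (Sum.inl i) * v (Sum.inl i) ^ 2 := by
      rw [hsa, Finset.mul_sum]
      exact Finset.sum_le_sum fun i _ =>
        mul_le_mul_of_nonneg_right (hdν i) (sq_nonneg _)
    have h2 : (0:ℝ) ≤ ∑ i : Fin (n/2), d (Sum.inr i) * v (Sum.inr i) ^ 2 :=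
      Finset.sum_nonneg fun i _ => mul_nonneg (hd _) (sq_nonneg _)
    linarith
  have hdiag0 : (0:ℝ) ≤ D :=
    Finset.sum_nonneg fun j _ => mul_nonneg (hd _) (sq_nonneg _)
  -- scaled operator bounds
  have hS2b : (n:ℝ)/25 * sb ≤ S2 := by
    have hkey := aux_scale_le X₂ ((n:ℝ)/25)
      (fun w hw => by
        have h := hX2 w hw
        rw [div_mul_eq_mul_div, le_div_iff₀ hn', one_mul] at h
        linarith) b
    linarith [hkey]
  have hS1b : S1 ≤ 9 * γ ^ 2 * (n:ℝ) * sa := by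
    have hkey := aux_scale_ge X₁ (9 * γ ^ 2 * (n:ℝ))
      (fun w hw => by
        have h := hX1 w hw
        rw [div_mul_eq_mul_div, div_le_iff₀ hn', one_mul] at h
        linarith) a
    linarith [hkey]
  -- Cauchy-Schwarz and expansion
  have hCS : C ^ 2 ≤ S1 * S2 := Finset.sum_mul_sq_le_sq_mul_sq _ _ _
  have hTexp : T = S1 + 2 * C + S2 := by
    rw [hTd, hS1d, hS2d, hCd]
    have hpt : ∀ i, (X₁.mulVec a + X₂.mulVec b) i ^ 2
        = (X₁.mulVec a i) ^ 2 + 2 * (X₁.mulVec a i * X₂.mulVec b i)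
          + (X₂.mulVec b i) ^ 2 := by
      intro i; simp only [Pi.add_apply]; ring
    simp only [hpt, Finset.sum_add_distrib, Finset.mul_sum]
  clear_value sa sb S1 S2 T C D
  clear key hv hvab hX1 hX2 hsa hsb hS1d hS2d hTd hCd hDd hdν hd ha hb hA a b A X₁ X₂ d v
  by_cases hcase : 1 / (400 * γ ^ 2) ≤ sa
  · -- diagonal term dominates
    refine le_trans (min_le_left _ _) ?_
    have h' : 1 ≤ sa * (400 * γ ^ 2) := (div_le_iff₀ (by positivity)).1 hcase
    have h1 : μ * ν / (400 * γ ^ 2) ≤ μ * (ν * sa) := by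
      rw [div_le_iff₀ (by positivity)]
      nlinarith [mul_le_mul_of_nonneg_left h' (mul_nonneg hμ.le hν.le)]
    have h2 : μ * (ν * sa) ≤ μ * D := mul_le_mul_of_nonneg_left hdiag hμ.le
    have h3 : (0:ℝ) ≤ (1/(n:ℝ)) * T := by positivity
    linarith
  · push_neg at hcase
    refine le_trans (min_le_right _ _) ?_
    set u : ℝ := Real.sqrt S1 with hu
    set w : ℝ := Real.sqrt S2 with hw
    set m : ℝ := Real.sqrt n with hm
    set r : ℝ := Real.sqrt 399 with hr
    have hu0 : 0 ≤ u := Real.sqrt_nonneg _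
    have hw0 : 0 ≤ w := Real.sqrt_nonneg _
    have hm0 : 0 ≤ m := Real.sqrt_nonneg _
    have hr0 : 0 ≤ r := Real.sqrt_nonneg _
    have hu2 : u ^ 2 = S1 := Real.sq_sqrt hS10
    have hw2 : w ^ 2 = S2 := Real.sq_sqrt hS20
    have hm2 : m ^ 2 = (n:ℝ) := Real.sq_sqrt hn'.le
    have hr2 : r ^ 2 = 399 := Real.sq_sqrt (by norm_num)
    have hmpos : 0 < m := by rw [hm]; exact Real.sqrt_pos.2 hn'
    have hr19 : 19 < r := by
      rw [hr]
      rw [show (19:ℝ) = Real.sqrt 361 by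
        rw [show (361:ℝ) = 19^2 by norm_num, Real.sqrt_sq (by norm_num)]]
      exact Real.sqrt_lt_sqrt (by norm_num) (by norm_num)
    clear_value u w m r
    have hcross : -(u * w) ≤ C := by
      nlinarith [sq_nonneg (C + u * w), mul_nonneg hu0 hw0]
    have hexpand : (w - u) ^ 2 = S2 - 2 * (u * w) + S1 := by
      rw [← hu2, ← hw2]; ring
    have hTlow : (w - u) ^ 2 ≤ T := by rw [hTexp, hexpand]; linarith [hcross]
    have hγ2 : 1 ≤ γ ^ 2 := one_le_pow₀ hγ.le
    -- u ≤ (3/20) m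
    have hsa' : sa ≤ 1 / (400 * γ ^ 2) := hcase.le
    have hub : u ≤ 3 / 20 * m := by
      have h2 : 9 * γ ^ 2 * sa ≤ 9 / 400 := by
        have h3 := mul_le_mul_of_nonneg_left hsa'
          (show (0:ℝ) ≤ 9 * γ ^ 2 by positivity)
        have h4 : 9 * γ ^ 2 * (1 / (400 * γ ^ 2)) = 9 / 400 := by
          field_simp
        rw [h4] at h3
        exact h3
      have h5 := mul_le_mul_of_nonneg_right h2 hn'.le
      have h6 : u ^ 2 ≤ (3 / 20 * m) ^ 2 := by
        rw [hu2]
        calc S1 ≤ 9 * γ ^ 2 * (n:ℝ) * sa := hS1b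
        _ ≤ 9 / 400 * (n:ℝ) := by linarith [h5]
        _ = (3 / 20 * m) ^ 2 := by rw [mul_pow, hm2]; norm_num
      exact le_of_pow_le_pow_left₀ two_ne_zero (mul_nonneg (by norm_num) hm0) h6
    have hwb : r / 100 * m ≤ w := by
      have hsalt : sa < 1 / 400 := by
        apply lt_of_lt_of_le hcase
        rw [div_le_div_iff₀ (by positivity) (by norm_num)]
        nlinarith [hγ2]
      have hsb' : (399:ℝ) / 400 ≤ sb := by linarith
      have h7 : (n:ℝ)/25 * (399/400) ≤ (n:ℝ)/25 * sb :=
        mul_le_mul_of_nonneg_left hsb' (by positivity)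
      have h8 : (r / 100 * m) ^ 2 ≤ w ^ 2 := by
        rw [hw2, mul_pow, div_pow, hr2, hm2]
        calc (399:ℝ)/100^2 * n = (n:ℝ)/25 * (399/400) := by ring
        _ ≤ S2 := le_trans h7 hS2b
      exact le_of_pow_le_pow_left₀ two_ne_zero hw0 h8
    have hc0 : 0 ≤ r / 100 - 3 / 20 := by linarith [hr19]
    have hwu : m * (r / 100 - 3 / 20) ≤ w - u := by linarith [hub, hwb]
    have hwu0 : 0 ≤ m * (r / 100 - 3 / 20) := mul_nonneg hm0 hc0
    have h9 : (m * (r / 100 - 3 / 20)) ^ 2 ≤ (w - u) ^ 2 :=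
      pow_le_pow_left₀ hwu0 hwu 2
    rw [mul_pow, hm2] at h9
    have hDterm : (0:ℝ) ≤ μ * D := mul_nonneg hμ.le hdiag0
    have hmain : (r / 100 - 3 / 20) ^ 2 ≤ 1 / (n:ℝ) * T := by
      rw [div_mul_eq_mul_div, le_div_iff₀ hn', one_mul]
      linarith [h9, hTlow]
    linarith [hmain, hDterm]
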